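/- Let a and b be coprime positive integers, k ≥ 1, and m ≥ 0. Then, in ℚ, the m-th power sum over R_k(a,b) satisfies s_k^m(a,b) = ∑_{λ+μ+ν=m} (m!/(λ!·μ!·ν!)) · a^{λ+μ} · b^{λ+ν} · (k-1)^λ · β_{ν+1}(a) · β_{μ+1}(b), where the sum ranges over all triples (λ,μ,ν) of nonnegative integers with λ + μ + ν = m. -/

import Mathlib

/-- `repCount a b j` is the number of representations of `j` in the form
`m * a + n * b` with `m, n : ℕ`. -/
noncomputable def repCount (a b j : ℕ) : ℕ :=
  Nat.card {p : ℕ × ℕ // p.1 * a + p.2 * b = j}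

/-- `bernoulliBeta n x = (B_n(x) - B_n(0)) / n`, where `B_n` is the `n`-th Bernoulli
polynomial; for `x = N : ℕ` this equals `∑_{j=0}^{N-1} j^(n-1)`. -/
noncomputable def bernoulliBeta (n : ℕ) (x : ℚ) : ℚ :=
  ((Polynomial.bernoulli n).eval x - (Polynomial.bernoulli n).eval 0) / n

open Finset in
private lemma bernoulliBeta_nat (p N : ℕ) :
    bernoulliBeta (p + 1) (N : ℚ) = ∑ i ∈ Finset.range N, (i : ℚ) ^ p := by
  unfold bernoulliBeta
  rw [Polynomial.bernoulli_eval_zero]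
  have heval : (Polynomial.bernoulli (p + 1)).eval (N : ℚ) =
      (∑ i ∈ Finset.range (p + 1),
        _root_.bernoulli i * ((p + 1).choose i) * (N : ℚ) ^ (p + 1 - i)) +
        _root_.bernoulli (p + 1) := by
    rw [Polynomial.bernoulli, Polynomial.eval_finset_sum]
    simp only [Polynomial.eval_monomial]
    rw [Finset.sum_range_succ]
    simp
  rw [heval, sum_range_pow N p, add_sub_cancel_right, ← Finset.sum_div]
  push_cast
  ring

private lemma trinom (x y z : ℚ) (m : ℕ) :
    (x + y + z) ^ m = ∑ p ∈ Finset.HasAntidiagonal.antidiagonal m, ∑ q ∈ Finset.HasAntidiagonal.antidiagonal p.2,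
      (m.factorial : ℚ) / (p.1.factorial * q.1.factorial * q.2.factorial) *
        x ^ p.1 * y ^ q.1 * z ^ q.2 := by
  simp only [Finset.Nat.sum_antidiagonal_eq_sum_range_succ_mk]
  rw [show x + y + z = x + (y + z) by ring, add_pow]
  refine Finset.sum_congr rfl fun k hk => ?_
  rw [Finset.mem_range, Nat.lt_succ_iff] at hk
  rw [add_pow, Finset.mul_sum, Finset.sum_mul]
  refine Finset.sum_congr rfl fun l hl => ?_
  rw [Finset.mem_range, Nat.lt_succ_iff] at hl
  have h1 : m.choose k * k.factorial * (m - k).factorial = m.factorial := by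
    have := Nat.add_choose_mul_factorial_mul_factorial k (m - k)
    rwa [Nat.add_sub_cancel' hk, Nat.choose_symm hk] at this
  have h2 : (m - k).choose l * l.factorial * (m - k - l).factorial = (m - k).factorial := by
    have := Nat.add_choose_mul_factorial_mul_factorial l (m - k - l)
    rwa [Nat.add_sub_cancel' hl, Nat.choose_symm hl] at this
  have hc : (m.factorial : ℚ) =
      (m.choose k : ℚ) * ((m - k).choose l) *
        (k.factorial * l.factorial * (m - k - l).factorial) := by
    push_cast [← h1, ← h2]
    ring
  have hk0 : (k.factorial : ℚ) ≠ 0 := Nat.cast_ne_zero.mpr k.factorial_ne_zero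
  have hl0 : (l.factorial : ℚ) ≠ 0 := Nat.cast_ne_zero.mpr l.factorial_ne_zero
  have hkl0 : ((m - k - l).factorial : ℚ) ≠ 0 :=
    Nat.cast_ne_zero.mpr (m - k - l).factorial_ne_zero
  field_simp
  rw [hc]
  ring

private lemma repCount_formula (a b : ℕ) (hb : 0 < b) (hab : Nat.Coprime a b)
    {i j : ℕ} (hi : i < b) (hj : j < a) (q : ℕ) :
    repCount a b (i * a + j * b + q * (a * b)) = q + 1 := by
  have key : ∀ m n : ℕ, m * a + n * b = i * a + j * b + q * (a * b) ↔
      ∃ t ≤ q, m = i + t * b ∧ n = j + (q - t) * a := by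
    intro m n
    constructor
    · intro h
      have h1 : m * a % b = i * a % b := by
        have e : i * a + j * b + q * (a * b) = i * a + (j + q * a) * b := by ring
        have : (m * a + n * b) % b = (i * a + (j + q * a) * b) % b := by rw [h, e]
        simpa [Nat.add_mul_mod_self_right] using this
      have hmod : m ≡ i [MOD b] :=
        Nat.ModEq.cancel_right_of_coprime (by rw [Nat.coprime_comm] at hab; exact hab) h1
      have him : i % b = i := Nat.mod_eq_of_lt hi
      have hmb : m % b = i := by
        have := hmod
        unfold Nat.ModEq at this
        omega
      set t := m / b with ht
      have hdm := Nat.div_add_mod m b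
      rw [← ht] at hdm
      have hm : m = i + t * b := by rw [mul_comm]; omega
      have h2 : i * a + (t * a + n) * b = i * a + (j + q * a) * b := by
        rw [hm] at h
        ring_nf at h ⊢
        linarith [h]
      have h3 : t * a + n = j + q * a :=
        Nat.eq_of_mul_eq_mul_right hb (Nat.add_left_cancel h2)
      have hqa : (q + 1) * a = q * a + a := by ring
      have htq : t ≤ q := by
        by_contra hgt
        push_neg at hgt
        have : (q + 1) * a ≤ t * a := Nat.mul_le_mul_right a hgt
        omega
      have h5 : (q - t) * a + t * a = q * a := by
        rw [← Nat.add_mul, Nat.sub_add_cancel htq]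
      exact ⟨t, htq, hm, by omega⟩
    · rintro ⟨t, ht, rfl, rfl⟩
      have h5 : (q - t) * (a * b) + t * (a * b) = q * (a * b) := by
        rw [← Nat.add_mul, Nat.sub_add_cancel ht]
      have : (i + t * b) * a + (j + (q - t) * a) * b =
          i * a + j * b + (t * (a * b) + (q - t) * (a * b)) := by ring
      omega
  let f : Fin (q + 1) → {p : ℕ × ℕ // p.1 * a + p.2 * b = i * a + j * b + q * (a * b)} :=
    fun t => ⟨(i + t.1 * b, j + (q - t.1) * a),
      (key _ _).2 ⟨t.1, Nat.lt_succ_iff.mp t.isLt, rfl, rfl⟩⟩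
  have hbij : Function.Bijective f := by
    constructor
    · intro t t' h
      have h1 := congrArg (fun p => p.1.1) h
      simp only [f] at h1
      have : t.1 * b = t'.1 * b := by omega
      exact Fin.ext (Nat.eq_of_mul_eq_mul_right hb this)
    · rintro ⟨⟨mm, nn⟩, hp⟩
      obtain ⟨t, htq, hm, hn⟩ := (key mm nn).1 hp
      refine ⟨⟨t, Nat.lt_succ_of_le htq⟩, Subtype.ext ?_⟩
      show (i + t * b, j + (q - t) * a) = (mm, nn)
      rw [← hm, ← hn]
  unfold repCount
  rw [← Nat.card_eq_of_bijective f hbij]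
  simp

private lemma uniq_rep (a b : ℕ) (hb : 0 < b) (hab : Nat.Coprime a b) {i i' j j' : ℕ}
    (hi : i < b) (hi' : i' < b) (h : i * a + j * b = i' * a + j' * b) :
    i = i' ∧ j = j' := by
  have h1 : i * a % b = i' * a % b := by
    have : (i * a + j * b) % b = (i' * a + j' * b) % b := by rw [h]
    simpa [Nat.add_mul_mod_self_right] using this
  have hmod : i ≡ i' [MOD b] :=
    Nat.ModEq.cancel_right_of_coprime (by rw [Nat.coprime_comm] at hab; exact hab) h1
  have h2 : i % b = i' % b := hmod
  rw [Nat.mod_eq_of_lt hi, Nat.mod_eq_of_lt hi'] at h2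
  subst h2
  have h3 : j * b = j' * b := by omega
  exact ⟨rfl, Nat.eq_of_mul_eq_mul_right hb h3⟩

private lemma repSet_eq (a b k : ℕ) (ha : 0 < a) (hb : 0 < b) (hab : Nat.Coprime a b)
    (hk : 1 ≤ k) :
    {j : ℕ | repCount a b j = k} =
      ↑((Finset.range b ×ˢ Finset.range a).image fun p =>
        p.1 * a + p.2 * b + (k - 1) * (a * b)) := by
  ext J
  simp only [Set.mem_setOf_eq, Finset.coe_image, Set.mem_image, Finset.mem_coe,
    Finset.mem_product, Finset.mem_range]
  constructor
  · intro hJ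
    have hpos : 0 < Nat.card {p : ℕ × ℕ // p.1 * a + p.2 * b = J} := by
      unfold repCount at hJ; omega
    obtain ⟨⟨⟨mm, nn⟩, hmn⟩⟩ := (Nat.card_pos_iff.mp hpos).1
    have hdm := Nat.div_add_mod mm b
    have e1 : mm % b + mm / b * b = mm := by rw [mul_comm]; omega
    have h1 : (mm % b) * a + (nn + mm / b * a) * b = J := by
      calc (mm % b) * a + (nn + mm / b * a) * b
          = (mm % b + mm / b * b) * a + nn * b := by ring
        _ = mm * a + nn * b := by rw [e1]
        _ = J := hmn
    set n' := nn + mm / b * a with hn'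
    have hdn := Nat.div_add_mod n' a
    have e2 : n' % a + n' / a * a = n' := by rw [mul_comm]; omega
    have h2 : (mm % b) * a + (n' % a) * b + (n' / a) * (a * b) = J := by
      calc (mm % b) * a + (n' % a) * b + (n' / a) * (a * b)
          = (mm % b) * a + (n' % a + n' / a * a) * b := by ring
        _ = (mm % b) * a + n' * b := by rw [e2]
        _ = J := h1
    have hfa := repCount_formula a b hb hab (Nat.mod_lt mm hb) (Nat.mod_lt n' ha) (n' / a)
    rw [h2] at hfa
    have hs : n' / a = k - 1 := by omega
    refine ⟨(mm % b, n' % a), ⟨Nat.mod_lt mm hb, Nat.mod_lt n' ha⟩, ?_⟩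
    rw [← hs]
    exact h2
  · rintro ⟨⟨i, j⟩, ⟨hi, hj⟩, rfl⟩
    have := repCount_formula a b hb hab hi hj (k - 1)
    exact this.trans (by omega)

/-- The `m`-th power sum over `R_k(a,b)` equals
`∑_{λ+μ+ν=m} m!/(λ!μ!ν!) a^(λ+μ) b^(λ+ν) (k-1)^λ β_{ν+1}(a) β_{μ+1}(b)`. -/
theorem power_sum_eq_bernoulli (a b k m : ℕ) (ha : 0 < a) (hb : 0 < b)
    (hab : Nat.Coprime a b) (hk : 1 ≤ k) :
    (∑ᶠ j ∈ {j : ℕ | repCount a b j = k}, (j : ℚ) ^ m) =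
      ∑ x ∈ Finset.HasAntidiagonal.antidiagonal m, ∑ y ∈ Finset.HasAntidiagonal.antidiagonal x.2,
        (Nat.factorial m : ℚ) /
            (Nat.factorial x.1 * Nat.factorial y.1 * Nat.factorial y.2) *
          (a : ℚ) ^ (x.1 + y.1) * (b : ℚ) ^ (x.1 + y.2) * ((k : ℚ) - 1) ^ x.1 *
          bernoulliBeta (y.2 + 1) (a : ℚ) * bernoulliBeta (y.1 + 1) (b : ℚ) := by
  have hinj : ∀ p ∈ Finset.range b ×ˢ Finset.range a, ∀ p' ∈ Finset.range b ×ˢ Finset.range a,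
      p.1 * a + p.2 * b + (k - 1) * (a * b) = p'.1 * a + p'.2 * b + (k - 1) * (a * b) →
      p = p' := by
    intro p hp p' hp' h
    simp only [Finset.mem_product, Finset.mem_range] at hp hp'
    have h' : p.1 * a + p.2 * b = p'.1 * a + p'.2 * b := by omega
    obtain ⟨h1, h2⟩ := uniq_rep a b hb hab hp.1 hp'.1 h'
    exact Prod.ext h1 h2
  rw [repSet_eq a b k ha hb hab hk, finsum_mem_coe_finset, Finset.sum_image hinj,
    Finset.sum_product]
  simp only [bernoulliBeta_nat]
  calc ∑ i ∈ Finset.range b, ∑ j ∈ Finset.range a,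
        ((i * a + j * b + (k - 1) * (a * b) : ℕ) : ℚ) ^ m
      = ∑ i ∈ Finset.range b, ∑ j ∈ Finset.range a, ∑ x ∈ Finset.HasAntidiagonal.antidiagonal m,
          ∑ y ∈ Finset.HasAntidiagonal.antidiagonal x.2,
          (m.factorial : ℚ) / (x.1.factorial * y.1.factorial * y.2.factorial) *
            (((k : ℚ) - 1) * a * b) ^ x.1 * ((i : ℚ) * a) ^ y.1 * ((j : ℚ) * b) ^ y.2 := by
        refine Finset.sum_congr rfl fun i _ => Finset.sum_congr rfl fun j _ => ?_
        rw [← trinom]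
        push_cast [Nat.cast_sub hk]
        ring
    _ = ∑ x ∈ Finset.HasAntidiagonal.antidiagonal m, ∑ y ∈ Finset.HasAntidiagonal.antidiagonal x.2,
          ∑ i ∈ Finset.range b, ∑ j ∈ Finset.range a,
          (m.factorial : ℚ) / (x.1.factorial * y.1.factorial * y.2.factorial) *
            (((k : ℚ) - 1) * a * b) ^ x.1 * ((i : ℚ) * a) ^ y.1 * ((j : ℚ) * b) ^ y.2 := by
        refine ((Finset.sum_congr rfl fun i _ => Finset.sum_comm).trans ?_)
        refine Finset.sum_comm.trans ?_
        refine Finset.sum_congr rfl fun x _ => ?_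
        refine ((Finset.sum_congr rfl fun i _ => Finset.sum_comm).trans ?_)
        exact Finset.sum_comm
    _ = _ := by
        refine Finset.sum_congr rfl fun x _ => Finset.sum_congr rfl fun y _ => ?_
        simp only [Finset.mul_sum, Finset.sum_mul, mul_pow]
        refine Finset.sum_congr rfl fun i _ => Finset.sum_congr rfl fun j _ => ?_
        ring
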